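/- Let d, m be positive integers, let U and O be d×d complex matrices, let V be a (d·m)×(d·m) complex matrix, and let c ∈ ℂ^m be a unit vector such that V(ψ ⊗ c) = (Uψ) ⊗ c for every ψ ∈ ℂ^d. Suppose furthermore that the projector |c⟩⟨c| decomposes as a finite real combination |c⟩⟨c| = Σⱼ λⱼ |ψⱼ⟩⟨ψⱼ| with λⱼ ∈ ℝ and ψⱼ ∈ ℂ^m. Then for every ψ ∈ ℂ^d, ⟨Uψ, O(Uψ)⟩ = Σⱼ λⱼ · ⟨V(ψ ⊗ ψⱼ), (O ⊗ I_m) V(ψ ⊗ ψⱼ)⟩. That is, the expectation value of O for the circuit U can be computed as a weighted sum of expectation values of O ⊗ I for the catalytic circuit V run on the inputs ψ ⊗ ψⱼ. -/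

import Mathlib

/- STATEMENT 6: If the catalyst projector |c⟩⟨c| decomposes as a finite real
combination Σⱼ λⱼ |ψⱼ⟩⟨ψⱼ|, then the expectation value of O for the circuit U
is the correspondingly weighted sum of expectation values of O ⊗ I for the
catalytic circuit V run on the inputs ψ ⊗ ψⱼ. -/

open Complex Matrix Kronecker

noncomputable section

/-- The inner product `⟨u,v⟩ = Σᵢ conj(u(i))·v(i)`, conjugate-linear in the
first argument. -/
def inn {ι : Type*} [Fintype ι] (u v : ι → ℂ) : ℂ :=
  ∑ i, (starRingEnd ℂ) (u i) * v i

/-- The tensor product of vectors: `(ψ ⊗ c)(i,j) = ψ(i)·c(j)`. -/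
def tens {d m : ℕ} (ψ : Fin d → ℂ) (c : Fin m → ℂ) : Fin d × Fin m → ℂ :=
  fun p => ψ p.1 * c p.2

/-- The projector `|u⟩⟨u|` with entries `u(i)·conj(u(j))`. -/
def proj {m : ℕ} (u : Fin m → ℂ) : Matrix (Fin m) (Fin m) ℂ :=
  Matrix.of fun i j => u i * (starRingEnd ℂ) (u j)

/-- The linear functional `A ↦ Σᵣₛ conj(ψ r₁) B r s ψ s₁ A s₂ r₂`. -/
def Tf {d m : ℕ} (B : Matrix (Fin d × Fin m) (Fin d × Fin m) ℂ) (ψ : Fin d → ℂ)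
    (A : Matrix (Fin m) (Fin m) ℂ) : ℂ :=
  ∑ r, ∑ s, (starRingEnd ℂ) (ψ r.1) * B r s * ψ s.1 * A s.2 r.2

lemma Tf_proj {d m : ℕ} (B : Matrix (Fin d × Fin m) (Fin d × Fin m) ℂ)
    (ψ : Fin d → ℂ) (u : Fin m → ℂ) :
    Tf B ψ (proj u) = inn (tens ψ u) (B.mulVec (tens ψ u)) := by
  simp only [Tf, inn, proj, tens, Matrix.mulVec, dotProduct, Matrix.of_apply,
    Finset.mul_sum, _root_.map_mul]
  refine Finset.sum_congr rfl fun r _ => Finset.sum_congr rfl fun s _ => ?_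
  ring

lemma Tf_add {d m : ℕ} (B : Matrix (Fin d × Fin m) (Fin d × Fin m) ℂ) (ψ : Fin d → ℂ)
    (A A' : Matrix (Fin m) (Fin m) ℂ) :
    Tf B ψ (A + A') = Tf B ψ A + Tf B ψ A' := by
  simp [Tf, Matrix.add_apply, mul_add, Finset.sum_add_distrib]

lemma Tf_smul {d m : ℕ} (B : Matrix (Fin d × Fin m) (Fin d × Fin m) ℂ) (ψ : Fin d → ℂ)
    (z : ℂ) (A : Matrix (Fin m) (Fin m) ℂ) :
    Tf B ψ (z • A) = z * Tf B ψ A := by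
  simp only [Tf, Matrix.smul_apply, smul_eq_mul, Finset.mul_sum]
  refine Finset.sum_congr rfl fun r _ => Finset.sum_congr rfl fun s _ => ?_
  ring

lemma Tf_sum {d m : ℕ} (B : Matrix (Fin d × Fin m) (Fin d × Fin m) ℂ) (ψ : Fin d → ℂ)
    {ι : Type*} (s : Finset ι) (f : ι → Matrix (Fin m) (Fin m) ℂ) :
    Tf B ψ (∑ j ∈ s, f j) = ∑ j ∈ s, Tf B ψ (f j) := by
  classical
  induction s using Finset.induction_on with
  | empty => simp [Tf]
  | insert _ _ h ih => rw [Finset.sum_insert h, Finset.sum_insert h, Tf_add, ih]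

lemma inn_mulVec_left {n : Type*} [Fintype n] (A : Matrix n n ℂ) (x y : n → ℂ) :
    inn (A.mulVec x) y = inn x (Aᴴ.mulVec y) := by
  simp only [inn, Matrix.mulVec, dotProduct, Matrix.conjTranspose_apply,
    map_sum, _root_.map_mul, Finset.sum_mul, Finset.mul_sum, starRingEnd_apply]
  rw [Finset.sum_comm]
  refine Finset.sum_congr rfl fun i _ => Finset.sum_congr rfl fun j _ => ?_
  ring

lemma kron_mulVec_tens {d m : ℕ} (O : Matrix (Fin d) (Fin d) ℂ)
    (a : Fin d → ℂ) (c : Fin m → ℂ) :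
    (O ⊗ₖ (1 : Matrix (Fin m) (Fin m) ℂ)).mulVec (tens a c)
      = tens (O.mulVec a) c := by
  funext p
  simp only [Matrix.mulVec, dotProduct, tens, Matrix.kroneckerMap_apply,
    Fintype.sum_prod_type, Matrix.one_apply]
  rw [Finset.sum_mul]
  refine Finset.sum_congr rfl fun q _ => ?_
  rw [Finset.sum_eq_single p.2]
  · simp [mul_assoc]
  · intro b _ hb
    simp [Ne.symm hb]
  · simp

lemma inn_tens_tens {d m : ℕ} (a b : Fin d → ℂ) (c : Fin m → ℂ) :
    inn (tens a c) (tens b c) = inn a b * inn c c := by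
  simp only [inn, tens, Fintype.sum_prod_type, _root_.map_mul]
  rw [Finset.sum_mul_sum]
  refine Finset.sum_congr rfl fun i _ => Finset.sum_congr rfl fun j _ => ?_
  ring

theorem catalytic_expectation_sum (d m : ℕ) (hd : 0 < d) (hm : 0 < m)
    (U O : Matrix (Fin d) (Fin d) ℂ)
    (V : Matrix (Fin d × Fin m) (Fin d × Fin m) ℂ)
    (c : Fin m → ℂ) (hc : inn c c = 1)
    (hV : ∀ ψ : Fin d → ℂ, V.mulVec (tens ψ c) = tens (U.mulVec ψ) c)
    (k : ℕ) (lam : Fin k → ℝ) (ψs : Fin k → Fin m → ℂ)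
    (hdecomp : proj c = ∑ j, ((lam j : ℂ) • proj (ψs j))) :
    ∀ ψ : Fin d → ℂ,
      inn (U.mulVec ψ) (O.mulVec (U.mulVec ψ))
        = ∑ j, (lam j : ℂ) *
            inn (V.mulVec (tens ψ (ψs j)))
              ((O ⊗ₖ (1 : Matrix (Fin m) (Fin m) ℂ)).mulVec (V.mulVec (tens ψ (ψs j)))) := by
  intro ψ
  set B := Vᴴ * ((O ⊗ₖ (1 : Matrix (Fin m) (Fin m) ℂ)) * V) with hB
  have key : ∀ u : Fin m → ℂ,
      inn (V.mulVec (tens ψ u))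
        ((O ⊗ₖ (1 : Matrix (Fin m) (Fin m) ℂ)).mulVec (V.mulVec (tens ψ u)))
      = Tf B ψ (proj u) := by
    intro u
    rw [Tf_proj, inn_mulVec_left, hB]
    simp [Matrix.mulVec_mulVec, Matrix.mul_assoc]
  have lhs_eq : inn (U.mulVec ψ) (O.mulVec (U.mulVec ψ)) = Tf B ψ (proj c) := by
    rw [← key c, hV, kron_mulVec_tens, inn_tens_tens, hc, mul_one]
  rw [lhs_eq, hdecomp]
  have lin : Tf B ψ (∑ j, ((lam j : ℂ) • proj (ψs j)))
      = ∑ j, (lam j : ℂ) * Tf B ψ (proj (ψs j)) := by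
    rw [Tf_sum]
    exact Finset.sum_congr rfl fun j _ => Tf_smul B ψ _ _
  rw [lin]
  exact Finset.sum_congr rfl fun j _ => by rw [key]

end
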